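/- Let (E, J, M) be a double factorization system on a category C, and let G = (G, ε, δ) be a comonad on C whose underlying functor preserves all small limits, trivial fibrations (G(M) ⊆ M) and bifibrant morphisms (G(J) ⊆ J). Then: (i) the preimages E_G, J_G, M_G of E, J, M under the forgetful functor U : C_G → C from the Eilenberg–Moore category of G-coalgebras form a (left-induced) double factorization system on C_G; (ii) U reflects (J·E)-local objects: if the underlying object of a G-coalgebra is (J·E)-local in C, then the coalgebra is (J_G·E_G)-local in C_G. In particular, the adjunction between the forgetful functor U and the cofree coalgebra functor is a Quillen adjunction. -/

import Mathlib

open CategoryTheory CategoryTheory.Limits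

universe v u v₂ u₂

namespace DFS

variable {C : Type u} [Category.{v} C]

/-- `f` is (left) orthogonal to `g`: every commutative square from `f` to `g`
admits a unique diagonal filler. -/
def Orth {A B X Y : C} (f : A ⟶ B) (g : X ⟶ Y) : Prop :=
  ∀ (u : A ⟶ X) (v : B ⟶ Y), u ≫ g = f ≫ v → ∃! h : B ⟶ X, f ≫ h = u ∧ h ≫ g = v

/-- Mutual orthogonality of two classes of morphisms. -/
def ClassOrth (L R : MorphismProperty C) : Prop :=
  ∀ ⦃A B X Y : C⦄ (f : A ⟶ B) (g : X ⟶ Y), L f → R g → Orth f g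

/-- The class `R·L` of composites `e ≫ m` with `e ∈ L` and `m ∈ R`. -/
def Comp (R L : MorphismProperty C) : MorphismProperty C :=
  fun X Y f => ∃ (Z : C) (e : X ⟶ Z) (m : Z ⟶ Y), L e ∧ R m ∧ e ≫ m = f

/-- An object `X` is `L`-local if precomposition with every member of `L` is a
bijection of hom-sets into `X`. -/
def IsLocal (L : MorphismProperty C) (X : C) : Prop :=
  ∀ ⦃A B : C⦄ (m : A ⟶ B), L m → Function.Bijective (fun g : B ⟶ X => m ≫ g)

/-- An object `X` is `L`-separating if precomposition with every member of `L` is an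
injection of hom-sets into `X`. -/
def IsSeparating (L : MorphismProperty C) (X : C) : Prop :=
  ∀ ⦃A B : C⦄ (m : A ⟶ B), L m → Function.Injective (fun g : B ⟶ X => m ≫ g)

/-- A double (orthogonal) factorization system. -/
structure IsDFS (E J M : MorphismProperty C) : Prop where
  postcomp_iso_E : ∀ ⦃A B B' : C⦄ (e : A ⟶ B) (i : B ⟶ B'), IsIso i → E e → E (e ≫ i)
  comp_iso_J : ∀ ⦃A' A B B' : C⦄ (i : A' ⟶ A) (j : A ⟶ B) (i' : B ⟶ B'),
      IsIso i → IsIso i' → J j → J (i ≫ j ≫ i')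
  precomp_iso_M : ∀ ⦃A' A B : C⦄ (i : A' ⟶ A) (m : A ⟶ B), IsIso i → M m → M (i ≫ m)
  fac : ∀ ⦃X Y : C⦄ (f : X ⟶ Y), ∃ (A B : C) (e : X ⟶ A) (j : A ⟶ B) (m : B ⟶ Y),
      E e ∧ J j ∧ M m ∧ e ≫ j ≫ m = f
  lift : ∀ ⦃A B B'' D D' F' : C⦄ (e : A ⟶ B) (j : B ⟶ B'') (j' : D ⟶ D') (m : D' ⟶ F')
      (u : A ⟶ D) (v : B'' ⟶ F'), E e → J j → J j' → M m →
      e ≫ j ≫ v = u ≫ j' ≫ m →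
      ∃! st : (B ⟶ D) × (B'' ⟶ D'),
        e ≫ st.1 = u ∧ st.1 ≫ j' = j ≫ st.2 ∧ st.2 ≫ m = v

/-- An (orthogonal) factorization system. -/
structure IsFS (L R : MorphismProperty C) : Prop where
  fac : ∀ ⦃X Y : C⦄ (f : X ⟶ Y), ∃ (Z : C) (e : X ⟶ Z) (m : Z ⟶ Y), L e ∧ R m ∧ e ≫ m = f
  left_iff : ∀ ⦃A B : C⦄ (f : A ⟶ B), L f ↔ ∀ ⦃X Y : C⦄ (g : X ⟶ Y), R g → Orth f g
  right_iff : ∀ ⦃X Y : C⦄ (g : X ⟶ Y), R g ↔ ∀ ⦃A B : C⦄ (f : A ⟶ B), L f → Orth f g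

/-- Stability of a class of morphisms under pullback. -/
def StableUnderPB (P : MorphismProperty C) : Prop :=
  ∀ ⦃A B A' B' : C⦄ (f : A ⟶ B) (g : B' ⟶ B) (f' : A' ⟶ B') (h : A' ⟶ A),
    IsPullback h f' f g → P f → P f'

/-- A left Quillen functor between categories equipped with dfs's: it maps
trivial cofibrations to trivial cofibrations and cofibrations to cofibrations. -/
def LeftQuillen {D : Type u₂} [Category.{v₂} D]
    (EC JC : MorphismProperty C) (ED JD : MorphismProperty D) (F : C ⥤ D) : Prop :=
  (∀ ⦃A B : C⦄ (f : A ⟶ B), EC f → ED (F.map f)) ∧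
  (∀ ⦃A B : C⦄ (f : A ⟶ B), Comp JC EC f → Comp JD ED (F.map f))

end DFS

namespace DFS

/-- The preimage of a class of morphisms under the forgetful functor from
Eilenberg–Moore coalgebras. -/
def coalgPre {C : Type u} [Category.{v} C] (G : Comonad C) (P : MorphismProperty C) :
    MorphismProperty G.Coalgebra :=
  fun _ _ f => P f.f

end DFS

namespace DFS

variable {C : Type u} [Category.{v} C] {E J M : MorphismProperty C}

lemma IsDFS.id_mem_J (h : IsDFS E J M) (X : C) : J (𝟙 X) := by
  obtain ⟨P, Q, e, j, m, hE, hJj, hMm, hfac⟩ := h.fac (𝟙 X)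
  obtain ⟨st, -, huniq⟩ := h.lift e j j m e m hE hJj hJj hMm rfl
  have h1 := huniq (𝟙 P, 𝟙 Q) ⟨by simp, by simp, by simp⟩
  have h2 := huniq (j ≫ m ≫ e, m ≫ e ≫ j)
    ⟨by simp [reassoc_of% hfac], by simp, by simp [hfac]⟩
  have hP : j ≫ m ≫ e = 𝟙 P := congrArg Prod.fst (h2.trans h1.symm)
  have hQ : m ≫ e ≫ j = 𝟙 Q := congrArg Prod.snd (h2.trans h1.symm)
  have hie : IsIso e := ⟨⟨j ≫ m, hfac, by simpa using hP⟩⟩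
  have him : IsIso m := ⟨⟨e ≫ j, by simpa using hQ, by simpa using hfac⟩⟩
  have := h.comp_iso_J e j m hie him hJj
  rwa [hfac] at this

lemma IsDFS.orth_comp (h : IsDFS E J M) {A Z B X Y : C} {e : A ⟶ Z} {j : Z ⟶ B}
    {m : X ⟶ Y} (hE : E e) (hJj : J j) (hMm : M m) : Orth (e ≫ j) m := by
  intro u v hsq
  obtain ⟨st, ⟨hs, hst, ht⟩, huniq⟩ := h.lift e j (𝟙 X) m u v hE hJj (h.id_mem_J X) hMm
    (by rw [Category.id_comp, hsq, Category.assoc])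
  refine ⟨st.2, ⟨?_, ht⟩, ?_⟩
  · have hj : j ≫ st.2 = st.1 := by simpa using hst.symm
    rw [Category.assoc, hj, hs]
  · intro h' ⟨hh1, hh2⟩
    have := huniq (j ≫ h', h') ⟨by simpa using hh1, by simp, hh2⟩
    exact congrArg Prod.snd this

lemma IsDFS.from_terminal_mem (h : IsDFS E J M) {X T : C} (hT : IsTerminal T)
    (hX : IsLocal (Comp J E) X) (t : X ⟶ T) : M t := by
  obtain ⟨P, Q, e, j, m, hE, hJj, hMm, hfac⟩ := h.fac t
  obtain ⟨r, hr⟩ := (hX (e ≫ j) ⟨P, e, j, hE, hJj, rfl⟩).2 (𝟙 X)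
  have hr' : (e ≫ j) ≫ r = 𝟙 X := hr
  obtain ⟨st, -, huniq⟩ := h.lift e j j m e m hE hJj hJj hMm rfl
  have h1 := huniq (𝟙 P, 𝟙 Q) ⟨by simp, by simp, by simp⟩
  have h2 := huniq (j ≫ r ≫ e, r ≫ e ≫ j)
    ⟨by simp [reassoc_of% hr'], by simp, hT.hom_ext _ _⟩
  have hQ : r ≫ e ≫ j = 𝟙 Q := congrArg Prod.snd (h2.trans h1.symm)
  have : IsIso (e ≫ j) := ⟨⟨r, hr', by simpa using hQ⟩⟩
  have := h.precomp_iso_M (e ≫ j) m this hMm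
  rwa [Category.assoc, hfac] at this

lemma IsDFS.sep (h : IsDFS E J M) {W T' : C} (hT' : IsTerminal T') {t : W ⟶ T'}
    (ht : M t) {P Q : C} {l : P ⟶ Q} (hl : Comp J E l) {p q : Q ⟶ W}
    (hpq : l ≫ p = l ≫ q) : p = q := by
  obtain ⟨Z, e, j, hE, hJj, rfl⟩ := hl
  obtain ⟨k, -, huniq⟩ := h.orth_comp hE hJj ht ((e ≫ j) ≫ p) (hT'.from Q)
    (hT'.hom_ext _ _)
  have h1 := huniq p ⟨rfl, hT'.hom_ext _ _⟩
  have h2 := huniq q ⟨hpq.symm, hT'.hom_ext _ _⟩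
  exact h1.trans h2.symm

end DFS

/-- Let `(E, J, M)` be a dfs on a (bicomplete) category `C` and `G` a
comonad whose underlying functor preserves all small limits, trivial fibrations
(`G(M) ⊆ M`) and bifibrant morphisms (`G(J) ⊆ J`).  Then (i) the preimages of `E`, `J`,
`M` under the forgetful functor form a (left-induced) dfs on the category of
`G`-coalgebras; (ii) the forgetful functor reflects `(J·E)`-local objects; in
particular the forgetful functor is a left Quillen functor, i.e. `U ⊣ cofree` is a
Quillen adjunction. -/
theorem statement9 {C : Type u} [Category.{v} C] [HasLimits C] [HasColimits C]
    (E J M : MorphismProperty C) (h : DFS.IsDFS E J M) (G : Comonad C)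
    [PreservesLimits G.toFunctor]
    (hM : ∀ ⦃A B : C⦄ (f : A ⟶ B), M f → M (G.toFunctor.map f))
    (hJ : ∀ ⦃A B : C⦄ (f : A ⟶ B), J f → J (G.toFunctor.map f)) :
    DFS.IsDFS (DFS.coalgPre G E) (DFS.coalgPre G J) (DFS.coalgPre G M) ∧
    (∀ X : G.Coalgebra, DFS.IsLocal (DFS.Comp J E) X.A →
      DFS.IsLocal (DFS.Comp (DFS.coalgPre G J) (DFS.coalgPre G E)) X) ∧
    DFS.LeftQuillen (DFS.coalgPre G E) (DFS.coalgPre G J) E J G.forget := by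
  have εnat : ∀ {U V : C} (w : U ⟶ V), G.ε.app U ≫ w = G.toFunctor.map w ≫ G.ε.app V :=
    fun w => (G.ε.naturality w).symm
  have δnat : ∀ {U V : C} (w : U ⟶ V), G.toFunctor.map w ≫ G.δ.app V =
      G.δ.app U ≫ G.toFunctor.map (G.toFunctor.map w) := fun w => G.δ.naturality w
  refine ⟨⟨?_, ?_, ?_, ?_, ?_⟩, ?_, ?_, ?_⟩
  · -- postcomp_iso_E
    intro A B B' e i hi he
    have hif : IsIso i.f := by
      have : IsIso (G.forget.map i) := inferInstance
      exact this
    exact h.postcomp_iso_E e.f i.f hif he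
  · -- comp_iso_J
    intro A' A B B' i j i' hi hi' hj
    have hif : IsIso i.f := by
      have : IsIso (G.forget.map i) := inferInstance
      exact this
    have hif' : IsIso i'.f := by
      have : IsIso (G.forget.map i') := inferInstance
      exact this
    exact h.comp_iso_J i.f j.f i'.f hif hif' hj
  · -- precomp_iso_M
    intro A' A B i m' hi hm'
    have hif : IsIso i.f := by
      have : IsIso (G.forget.map i) := inferInstance
      exact this
    exact h.precomp_iso_M i.f m'.f hif hm'
  · -- factorization
    intro X Y f
    obtain ⟨P, Q, e, j, m, hE, hJj, hMm, hfac⟩ := h.fac f.f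
    have hcond : e ≫ j ≫ m ≫ Y.a =
        (X.a ≫ G.toFunctor.map e) ≫ G.toFunctor.map j ≫ G.toFunctor.map m := by
      calc e ≫ j ≫ m ≫ Y.a = (e ≫ j ≫ m) ≫ Y.a := by simp
        _ = f.f ≫ Y.a := by rw [hfac]
        _ = X.a ≫ G.toFunctor.map f.f := f.h.symm
        _ = X.a ≫ G.toFunctor.map (e ≫ j ≫ m) := by rw [hfac]
        _ = _ := by simp
    obtain ⟨⟨α, β⟩, ⟨hα, hαβ, hβ⟩, huniq⟩ := h.lift e j (G.toFunctor.map j)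
      (G.toFunctor.map m) (X.a ≫ G.toFunctor.map e) (m ≫ Y.a) hE hJj (hJ j hJj)
      (hM m hMm) hcond
    obtain ⟨st', -, huniq'⟩ := h.lift e j j m e m hE hJj hJj hMm rfl
    have hc1 := huniq' (𝟙 P, 𝟙 Q) ⟨by simp, by simp, by simp⟩
    have hc2 := huniq' (α ≫ G.ε.app P, β ≫ G.ε.app Q)
      ⟨by rw [reassoc_of% hα, ← εnat e, reassoc_of% X.counit],
       by rw [Category.assoc, εnat j, reassoc_of% hαβ],
       by rw [Category.assoc, εnat m, reassoc_of% hβ, Y.counit, Category.comp_id]⟩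
    have hcP : α ≫ G.ε.app P = 𝟙 P := congrArg Prod.fst (hc2.trans hc1.symm)
    have hcQ : β ≫ G.ε.app Q = 𝟙 Q := congrArg Prod.snd (hc2.trans hc1.symm)
    have hcond2 : e ≫ j ≫ m ≫ Y.a ≫ G.toFunctor.map Y.a =
        (X.a ≫ G.toFunctor.map X.a ≫ G.toFunctor.map (G.toFunctor.map e)) ≫
          G.toFunctor.map (G.toFunctor.map j) ≫ G.toFunctor.map (G.toFunctor.map m) := by
      calc e ≫ j ≫ m ≫ Y.a ≫ G.toFunctor.map Y.a
          = (e ≫ j ≫ m) ≫ Y.a ≫ G.toFunctor.map Y.a := by simp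
        _ = f.f ≫ Y.a ≫ G.toFunctor.map Y.a := by rw [hfac]
        _ = X.a ≫ G.toFunctor.map f.f ≫ G.toFunctor.map Y.a := by
            rw [← reassoc_of% f.h]
        _ = X.a ≫ G.toFunctor.map (f.f ≫ Y.a) := by rw [Functor.map_comp]
        _ = X.a ≫ G.toFunctor.map (X.a ≫ G.toFunctor.map f.f) := by rw [f.h]
        _ = X.a ≫ G.toFunctor.map X.a ≫ G.toFunctor.map (G.toFunctor.map f.f) := by
            rw [Functor.map_comp]
        _ = X.a ≫ G.toFunctor.map X.a ≫ G.toFunctor.map (G.toFunctor.map (e ≫ j ≫ m)) := by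
            rw [hfac]
        _ = _ := by simp
    obtain ⟨st'', -, huniq''⟩ := h.lift e j (G.toFunctor.map (G.toFunctor.map j))
      (G.toFunctor.map (G.toFunctor.map m))
      (X.a ≫ G.toFunctor.map X.a ≫ G.toFunctor.map (G.toFunctor.map e))
      (m ≫ Y.a ≫ G.toFunctor.map Y.a) hE hJj (hJ _ (hJ _ hJj)) (hM _ (hM _ hMm)) hcond2
    have hd1 := huniq'' (α ≫ G.δ.app P, β ≫ G.δ.app Q)
      ⟨by rw [reassoc_of% hα, δnat e, reassoc_of% X.coassoc],
       by rw [Category.assoc, ← δnat j, reassoc_of% hαβ],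
       by rw [Category.assoc, ← δnat m, reassoc_of% hβ, Y.coassoc]⟩
    have hd2 := huniq'' (α ≫ G.toFunctor.map α, β ≫ G.toFunctor.map β)
      ⟨by rw [reassoc_of% hα, ← Functor.map_comp, hα, Functor.map_comp],
       by rw [Category.assoc, ← Functor.map_comp, hαβ, Functor.map_comp, reassoc_of% hαβ],
       by rw [Category.assoc, ← Functor.map_comp, hβ, Functor.map_comp, reassoc_of% hβ]⟩
    have haP : α ≫ G.δ.app P = α ≫ G.toFunctor.map α :=
      congrArg Prod.fst (hd1.trans hd2.symm)
    have haQ : β ≫ G.δ.app Q = β ≫ G.toFunctor.map β :=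
      congrArg Prod.snd (hd1.trans hd2.symm)
    refine ⟨⟨P, α, hcP, haP⟩, ⟨Q, β, hcQ, haQ⟩, ⟨e, hα.symm⟩, ⟨j, hαβ⟩, ⟨m, hβ⟩,
      hE, hJj, hMm, ?_⟩
    exact Comonad.Coalgebra.Hom.ext hfac
  · -- lifting
    intro A B B'' D D' F' e j j' m u v hE hJj hJ' hMm hsq
    have hsqf : e.f ≫ j.f ≫ v.f = u.f ≫ j'.f ≫ m.f := by
      have := congrArg Comonad.Coalgebra.Hom.f hsq
      simpa using this
    obtain ⟨⟨s, t⟩, ⟨hs, hst, ht⟩, huniq1⟩ :=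
      h.lift e.f j.f j'.f m.f u.f v.f hE hJj hJ' hMm hsqf
    have hcond : e.f ≫ j.f ≫ v.f ≫ F'.a =
        (u.f ≫ D.a) ≫ G.toFunctor.map j'.f ≫ G.toFunctor.map m.f := by
      calc e.f ≫ j.f ≫ v.f ≫ F'.a = (e.f ≫ j.f ≫ v.f) ≫ F'.a := by simp
        _ = (u.f ≫ j'.f ≫ m.f) ≫ F'.a := by rw [hsqf]
        _ = u.f ≫ j'.f ≫ m.f ≫ F'.a := by simp
        _ = u.f ≫ j'.f ≫ D'.a ≫ G.toFunctor.map m.f := by rw [m.h]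
        _ = u.f ≫ (j'.f ≫ D'.a) ≫ G.toFunctor.map m.f := by simp
        _ = u.f ≫ (D.a ≫ G.toFunctor.map j'.f) ≫ G.toFunctor.map m.f := by rw [j'.h]
        _ = _ := by simp
    obtain ⟨stG, -, huniqG⟩ := h.lift e.f j.f (G.toFunctor.map j'.f)
      (G.toFunctor.map m.f) (u.f ≫ D.a) (v.f ≫ F'.a) hE hJj (hJ _ hJ') (hM _ hMm) hcond
    have hg1 := huniqG (s ≫ D.a, t ≫ D'.a)
      ⟨by rw [reassoc_of% hs],
       by rw [Category.assoc, j'.h, reassoc_of% hst],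
       by rw [Category.assoc, m.h, reassoc_of% ht]⟩
    have hg2 := huniqG (B.a ≫ G.toFunctor.map s, B''.a ≫ G.toFunctor.map t)
      ⟨by rw [← reassoc_of% e.h, ← Functor.map_comp, hs, u.h],
       by rw [Category.assoc, ← Functor.map_comp, hst, Functor.map_comp, reassoc_of% j.h],
       by rw [Category.assoc, ← Functor.map_comp, ht, v.h]⟩
    have hhs : B.a ≫ G.toFunctor.map s = s ≫ D.a :=
      congrArg Prod.fst (hg2.trans hg1.symm)
    have hht : B''.a ≫ G.toFunctor.map t = t ≫ D'.a :=
      congrArg Prod.snd (hg2.trans hg1.symm)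
    refine ⟨(⟨s, hhs⟩, ⟨t, hht⟩), ⟨Comonad.Coalgebra.Hom.ext hs,
      Comonad.Coalgebra.Hom.ext hst, Comonad.Coalgebra.Hom.ext ht⟩, ?_⟩
    rintro ⟨y1, y2⟩ ⟨hy1, hy2, hy3⟩
    have hy1' : e.f ≫ y1.f = u.f := congrArg Comonad.Coalgebra.Hom.f hy1
    have hy2' : y1.f ≫ j'.f = j.f ≫ y2.f := congrArg Comonad.Coalgebra.Hom.f hy2
    have hy3' : y2.f ≫ m.f = v.f := congrArg Comonad.Coalgebra.Hom.f hy3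
    have := huniq1 (y1.f, y2.f) ⟨hy1', hy2', hy3'⟩
    have h1 : y1.f = s := congrArg Prod.fst this
    have h2 : y2.f = t := congrArg Prod.snd this
    exact Prod.ext (Comonad.Coalgebra.Hom.ext h1) (Comonad.Coalgebra.Hom.ext h2)
  · -- locality reflection
    intro X hX A B mm hmm
    obtain ⟨Z, e, j, hEe, hJj, hc⟩ := hmm
    have hMf : DFS.Comp J E mm.f := by
      refine ⟨Z.A, e.f, j.f, hEe, hJj, ?_⟩
      have := congrArg Comonad.Coalgebra.Hom.f hc
      simpa using this
    have bij := hX mm.f hMf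
    have ht : M (terminal.from X.A) :=
      h.from_terminal_mem terminalIsTerminal hX (terminal.from X.A)
    have hGT : IsTerminal (G.toFunctor.obj (⊤_ C)) :=
      terminalIsTerminal.isTerminalObj G.toFunctor (⊤_ C)
    constructor
    · intro g₁ g₂ hg
      apply Comonad.Coalgebra.Hom.ext
      have hgf : mm.f ≫ g₁.f = mm.f ≫ g₂.f := by
        have := congrArg Comonad.Coalgebra.Hom.f hg
        simpa using this
      exact bij.1 hgf
    · intro uu
      obtain ⟨g, hg⟩ := bij.2 uu.f
      have hg : mm.f ≫ g = uu.f := hg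
      have hhom : B.a ≫ G.toFunctor.map g = g ≫ X.a := by
        apply h.sep hGT (hM _ ht) hMf
        calc mm.f ≫ B.a ≫ G.toFunctor.map g
            = A.a ≫ G.toFunctor.map mm.f ≫ G.toFunctor.map g := by
              rw [← reassoc_of% mm.h]
          _ = A.a ≫ G.toFunctor.map (mm.f ≫ g) := by rw [Functor.map_comp]
          _ = A.a ≫ G.toFunctor.map uu.f := by rw [hg]
          _ = uu.f ≫ X.a := uu.h
          _ = (mm.f ≫ g) ≫ X.a := by rw [hg]
          _ = mm.f ≫ g ≫ X.a := by simp
      exact ⟨⟨g, hhom⟩, Comonad.Coalgebra.Hom.ext hg⟩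
  · -- left Quillen (E part)
    intro A B f hf
    exact hf
  · -- left Quillen (J·E part)
    rintro A B f ⟨Z, e, j, hEe, hJj, hc⟩
    refine ⟨Z.A, e.f, j.f, hEe, hJj, ?_⟩
    have := congrArg Comonad.Coalgebra.Hom.f hc
    simp at this
    exact this
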